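/- For every integer k and all real a, ε, the matrix P·Z^(−2k) commutes with the Harper matrix at b = 2πk/N: (P·Z^(−2k)) · h(a, 2πk/N, ε) = h(a, 2πk/N, ε) · (P·Z^(−2k)). -/

import Mathlib

open Matrix Complex

/-- The primitive `N`-th root of unity `ω = exp(2πi/N)`. -/
noncomputable def omegaN (N : ℕ) : ℂ := Complex.exp (2 * (Real.pi : ℂ) * Complex.I / (N : ℂ))

/-- The clock matrix `Z` with `Z_{jk} = ω^j` if `j = k`, `0` otherwise. -/
noncomputable def clockZ (N : ℕ) : Matrix (Fin N) (Fin N) ℂ :=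
  Matrix.diagonal fun j => omegaN N ^ (j : ℕ)

/-- The shift matrix `X` with `X_{jk} = 1` if `j = k + 1 (mod N)`, `0` otherwise. -/
def shiftX (N : ℕ) : Matrix (Fin N) (Fin N) ℂ :=
  Matrix.of fun j k => if (j : ℕ) = ((k : ℕ) + 1) % N then 1 else 0

/-- The shifted Harper matrix
`h(a,b,ε) = (a/2)·e^{ib}·X + (a/2)·e^{−ib}·Xᴴ + (ε/2)·(Z + Zᴴ)`. -/
noncomputable def harper (N : ℕ) (a b ε : ℝ) : Matrix (Fin N) (Fin N) ℂ :=
  ((a : ℂ) / 2 * Complex.exp ((b : ℂ) * Complex.I)) • shiftX N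
  + ((a : ℂ) / 2 * Complex.exp (-(b : ℂ) * Complex.I)) • (shiftX N)ᴴ
  + ((ε : ℂ) / 2) • (clockZ N + (clockZ N)ᴴ)

/-- The parity matrix `P` with `P_{jk} = 1` if `j + k ≡ 0 (mod N)`, `0` otherwise. -/
def parityP (N : ℕ) : Matrix (Fin N) (Fin N) ℂ :=
  Matrix.of fun j k => if ((j : ℕ) + (k : ℕ)) % N = 0 then 1 else 0

/-- The discrete Fourier transform matrix `Q` with `Q_{jk} = ω^{jk}/√N`. -/
noncomputable def dftQ (N : ℕ) : Matrix (Fin N) (Fin N) ℂ :=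
  Matrix.of fun j k => omegaN N ^ ((j : ℕ) * (k : ℕ)) / (Real.sqrt N : ℂ)

lemma omega_ne (N : ℕ) : omegaN N ≠ 0 := Complex.exp_ne_zero _

lemma omega_pow_N {N : ℕ} (hN : N ≠ 0) : omegaN N ^ N = 1 := by
  rw [omegaN, ← Complex.exp_nat_mul]
  have : (N : ℂ) ≠ 0 := Nat.cast_ne_zero.mpr hN
  rw [mul_div_cancel₀ _ this, Complex.exp_two_pi_mul_I]

lemma omega_zpow_congr {N : ℕ} (hN : N ≠ 0) {z₁ z₂ : ℤ} (h : z₁ ≡ z₂ [ZMOD (N:ℤ)]) :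
    omegaN N ^ z₁ = omegaN N ^ z₂ := by
  obtain ⟨t, ht⟩ := Int.ModEq.dvd h
  have h2 : z₁ = z₂ + (N:ℤ) * (-t) := by rw [mul_neg, ← ht]; ring
  rw [h2, zpow_add₀ (omega_ne N), _root_.zpow_mul, zpow_natCast, omega_pow_N hN,
    _root_.one_zpow, mul_one]

lemma conj_omega_zpow (N : ℕ) (z : ℤ) :
    (starRingEnd ℂ) (omegaN N ^ z) = omegaN N ^ (-z) := by
  have hco : (starRingEnd ℂ) (omegaN N) = (omegaN N)⁻¹ := by
    rw [omegaN, ← Complex.exp_conj, ← Complex.exp_neg]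
    congr 1
    simp [map_div₀, Complex.conj_I, map_ofNat]
    ring
  rw [map_zpow₀, hco, _root_.inv_zpow, ← _root_.zpow_neg]

lemma int_emod_self_modeq (a n : ℤ) : a % n ≡ a [ZMOD n] := Int.emod_emod_of_dvd a dvd_rfl

lemma fin_neg_val_modeq {N : ℕ} [NeZero N] (j : Fin N) :
    (((-j : Fin N) : ℕ) : ℤ) ≡ -((j : ℕ) : ℤ) [ZMOD (N:ℤ)] := by
  have h : ((-j : Fin N) : ℕ) = (N - (j:ℕ)) % N := Fin.coe_neg j
  rw [h]
  have hle : (j:ℕ) ≤ N := j.isLt.le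
  calc (((N - (j:ℕ)) % N : ℕ) : ℤ) = ((N - (j:ℕ) : ℕ) : ℤ) % N := Int.natCast_mod _ _
    _ ≡ ((N - (j:ℕ) : ℕ) : ℤ) [ZMOD (N:ℤ)] := int_emod_self_modeq _ _
    _ = (N:ℤ) - (j:ℕ) := by push_cast [hle]; ring
    _ ≡ 0 - (j:ℕ) [ZMOD (N:ℤ)] := Int.ModEq.sub_right _ (Int.modEq_zero_iff_dvd.mpr dvd_rfl)
    _ = -((j:ℕ):ℤ) := by ring

lemma fin_add_one_val_modeq {N : ℕ} [NeZero N] (j : Fin N) :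
    (((j + 1 : Fin N) : ℕ) : ℤ) ≡ ((j : ℕ) : ℤ) + 1 [ZMOD (N:ℤ)] := by
  have h : ((j + 1 : Fin N) : ℕ) = ((j:ℕ) + (1 : Fin N).val) % N := Fin.val_add j 1
  rw [h]
  have h1 : (((1 : Fin N).val : ℕ) : ℤ) ≡ 1 [ZMOD (N:ℤ)] := by
    have : ((1 : Fin N).val : ℕ) = 1 % N := Fin.val_one' N
    rw [this]
    calc ((1 % N : ℕ) : ℤ) = (1:ℤ) % N := Int.natCast_mod _ _
      _ ≡ 1 [ZMOD (N:ℤ)] := int_emod_self_modeq _ _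
  calc ((((j:ℕ) + (1 : Fin N).val) % N : ℕ) : ℤ)
      = (((j:ℕ) + (1 : Fin N).val : ℕ) : ℤ) % N := Int.natCast_mod _ _
    _ ≡ (((j:ℕ) + (1 : Fin N).val : ℕ) : ℤ) [ZMOD (N:ℤ)] := int_emod_self_modeq _ _
    _ = ((j:ℕ):ℤ) + (((1 : Fin N).val : ℕ) : ℤ) := by push_cast; ring
    _ ≡ ((j:ℕ):ℤ) + 1 [ZMOD (N:ℤ)] := Int.ModEq.add_left _ h1

lemma clockZ_zpow {N : ℕ} (hN : N ≠ 0) (m : ℤ) :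
    clockZ N ^ m = Matrix.diagonal (fun j : Fin N => omegaN N ^ (m * ((j:ℕ):ℤ))) := by
  have hnat : ∀ n : ℕ, clockZ N ^ n
      = Matrix.diagonal (fun j : Fin N => omegaN N ^ (((n:ℤ)) * ((j:ℕ):ℤ))) := by
    intro n
    rw [clockZ, Matrix.diagonal_pow]
    have hfun : ((fun j : Fin N => omegaN N ^ (j:ℕ)) ^ n)
        = fun j : Fin N => omegaN N ^ (((n:ℤ)) * ((j:ℕ):ℤ)) := by
      funext j
      show (omegaN N ^ (j:ℕ)) ^ n = _
      rw [← pow_mul, ← zpow_natCast]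
      congr 1
      push_cast
      ring
    rw [hfun]
  rcases Int.eq_nat_or_neg m with ⟨n, rfl | rfl⟩
  · rw [zpow_natCast, hnat]
  · rw [Matrix.zpow_neg_natCast, hnat]
    apply Matrix.inv_eq_right_inv
    rw [Matrix.diagonal_mul_diagonal, ← Matrix.diagonal_one, Matrix.diagonal_eq_diagonal_iff]
    intro j
    rw [← zpow_add₀ (omega_ne N),
      show ((n:ℤ)) * ((j:ℕ):ℤ) + (-(n:ℤ)) * ((j:ℕ):ℤ) = 0 by ring, zpow_zero]

lemma parity_cond {N : ℕ} [NeZero N] (j l : Fin N) :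
    (((j:ℕ) + (l:ℕ)) % N = 0) ↔ l = -j := by
  have h0 : (((j + l : Fin N) : ℕ) = 0) ↔ (j + l = 0) := Fin.val_eq_zero_iff
  rw [show ((j:ℕ) + (l:ℕ)) % N = ((j + l : Fin N) : ℕ) from (Fin.val_add _ _).symm,
    h0, add_eq_zero_iff_neg_eq, eq_comm]

lemma M_apply {N : ℕ} [NeZero N] (m : ℤ) (j l : Fin N) :
    (parityP N * clockZ N ^ m) j l
      = if l = -j then omegaN N ^ (m * ((l:ℕ):ℤ)) else 0 := by
  rw [clockZ_zpow (NeZero.ne N), Matrix.mul_diagonal]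
  simp only [parityP, Matrix.of_apply, parity_cond, ite_mul, one_mul, zero_mul]

set_option linter.unusedVariables false in
lemma shiftX_cond {N : ℕ} [NeZero N] (hN : 2 ≤ N) (j l : Fin N) :
    ((j:ℕ) = ((l:ℕ) + 1) % N) ↔ j = l + 1 := by
  have h1 : ((l + 1 : Fin N) : ℕ) = ((l:ℕ) + 1) % N := by
    rw [Fin.val_add, Fin.val_one', Nat.mod_eq_of_lt (show 1 < N by omega)]
  rw [← h1, Fin.val_inj]

lemma mul_clockZ {N : ℕ} (A : Matrix (Fin N) (Fin N) ℂ) (j l : Fin N) :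
    (A * clockZ N) j l = A j l * omegaN N ^ (l:ℕ) := by
  unfold clockZ; rw [Matrix.mul_diagonal]

lemma clockZ_mul {N : ℕ} (A : Matrix (Fin N) (Fin N) ℂ) (j l : Fin N) :
    (clockZ N * A) j l = omegaN N ^ (j:ℕ) * A j l := by
  unfold clockZ; rw [Matrix.diagonal_mul]

lemma mul_clockZH {N : ℕ} (A : Matrix (Fin N) (Fin N) ℂ) (j l : Fin N) :
    (A * (clockZ N)ᴴ) j l = A j l * (starRingEnd ℂ) (omegaN N ^ (l:ℕ)) := by
  unfold clockZ; rw [Matrix.diagonal_conjTranspose, Matrix.mul_diagonal]; rfl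

lemma clockZH_mul {N : ℕ} (A : Matrix (Fin N) (Fin N) ℂ) (j l : Fin N) :
    ((clockZ N)ᴴ * A) j l = (starRingEnd ℂ) (omegaN N ^ (j:ℕ)) * A j l := by
  unfold clockZ; rw [Matrix.diagonal_conjTranspose, Matrix.diagonal_mul]; rfl

lemma MZ {N : ℕ} (hN : 2 ≤ N) (m : ℤ) : (parityP N * clockZ N ^ m) * clockZ N
    = (clockZ N)ᴴ * (parityP N * clockZ N ^ m) := by
  haveI : NeZero N := ⟨by omega⟩
  ext j l
  rw [mul_clockZ, clockZH_mul, M_apply]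
  by_cases h : l = -j
  · rw [if_pos h, h]
    have e1 : omegaN N ^ (((-j : Fin N)) : ℕ) = omegaN N ^ (-((j:ℕ):ℤ)) := by
      rw [← zpow_natCast (omegaN N) (((-j : Fin N)) : ℕ)]
      exact omega_zpow_congr (show N ≠ 0 by omega) (fin_neg_val_modeq j)
    have e2 : (starRingEnd ℂ) (omegaN N ^ ((j:ℕ))) = omegaN N ^ (-((j:ℕ):ℤ)) := by
      rw [← zpow_natCast (omegaN N) (j:ℕ)]
      exact conj_omega_zpow N _
    rw [e1, e2]
    ring
  · rw [if_neg h, zero_mul, mul_zero]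

lemma MZH {N : ℕ} (hN : 2 ≤ N) (m : ℤ) : (parityP N * clockZ N ^ m) * (clockZ N)ᴴ
    = clockZ N * (parityP N * clockZ N ^ m) := by
  haveI : NeZero N := ⟨by omega⟩
  ext j l
  rw [mul_clockZH, clockZ_mul, M_apply]
  by_cases h : l = -j
  · rw [if_pos h, h]
    have e3 : (starRingEnd ℂ) (omegaN N ^ (((-j : Fin N)) : ℕ)) = omegaN N ^ (((j:ℕ):ℤ)) := by
      rw [← zpow_natCast (omegaN N) (((-j : Fin N)) : ℕ), conj_omega_zpow]
      exact omega_zpow_congr (show N ≠ 0 by omega)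
        (by simpa using (fin_neg_val_modeq j).neg)
    rw [e3, ← zpow_natCast (omegaN N) (j:ℕ)]
    ring
  · rw [if_neg h, zero_mul, mul_zero]

lemma MX {N : ℕ} (hN : 2 ≤ N) (m : ℤ) : (parityP N * clockZ N ^ m) * shiftX N
    = (omegaN N ^ m) • ((shiftX N)ᴴ * (parityP N * clockZ N ^ m)) := by
  haveI : NeZero N := ⟨by omega⟩
  have hN0 : N ≠ 0 := by omega
  ext j l
  rw [Matrix.smul_apply, Matrix.mul_apply, Matrix.mul_apply]
  rw [Finset.sum_eq_single_of_mem (-j : Fin N) (Finset.mem_univ _)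
    (fun x _ hx => by rw [M_apply, if_neg hx, zero_mul])]
  rw [Finset.sum_eq_single_of_mem (-l : Fin N) (Finset.mem_univ _)
    (fun x _ hx => by
      rw [M_apply, if_neg (fun hc => hx (by rw [hc]; simp)), mul_zero])]
  rw [M_apply, M_apply, if_pos rfl, if_pos (show l = -(-l) by rw [_root_.neg_neg])]
  simp only [shiftX, Matrix.conjTranspose_apply, Matrix.of_apply, shiftX_cond hN,
    apply_ite (star : ℂ → ℂ), star_one, star_zero]
  by_cases h : (-j : Fin N) = l + 1
  · have h2 : (-l : Fin N) = j + 1 := by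
      have hl : l = -j - 1 := by rw [h]; abel
      rw [hl]; abel
    rw [if_pos h, if_pos h2]
    simp only [star_one, one_mul, mul_one, smul_eq_mul]
    rw [h, omega_zpow_congr hN0 ((fin_add_one_val_modeq l).mul_left m),
      show m * (((l:ℕ):ℤ) + 1) = m + m * ((l:ℕ):ℤ) by ring,
      zpow_add₀ (omega_ne N)]
  · have h2 : (-l : Fin N) ≠ j + 1 := by
      intro hc
      apply h
      have hl : l = -j - 1 := by rw [← neg_neg l, hc]; abel
      rw [hl]; abel
    rw [if_neg h, if_neg h2]
    simp

lemma MXH {N : ℕ} (hN : 2 ≤ N) (m : ℤ) : (parityP N * clockZ N ^ m) * (shiftX N)ᴴ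
    = (omegaN N ^ (-m)) • (shiftX N * (parityP N * clockZ N ^ m)) := by
  haveI : NeZero N := ⟨by omega⟩
  have hN0 : N ≠ 0 := by omega
  ext j l
  rw [Matrix.smul_apply, Matrix.mul_apply, Matrix.mul_apply]
  rw [Finset.sum_eq_single_of_mem (-j : Fin N) (Finset.mem_univ _)
    (fun x _ hx => by rw [M_apply, if_neg hx, zero_mul])]
  rw [Finset.sum_eq_single_of_mem (-l : Fin N) (Finset.mem_univ _)
    (fun x _ hx => by
      rw [M_apply, if_neg (fun hc => hx (by rw [hc]; simp)), mul_zero])]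
  rw [M_apply, M_apply, if_pos rfl, if_pos (show l = -(-l) by rw [_root_.neg_neg])]
  simp only [shiftX, Matrix.conjTranspose_apply, Matrix.of_apply, shiftX_cond hN,
    apply_ite (star : ℂ → ℂ), star_one, star_zero]
  by_cases h : l = (-j : Fin N) + 1
  · have h2 : j = (-l : Fin N) + 1 := by rw [h]; abel
    rw [if_pos h, if_pos h2]
    simp only [star_one, one_mul, mul_one, smul_eq_mul]
    rw [omega_zpow_congr hN0 ((fin_neg_val_modeq j).mul_left m)]
    have hl : m * ((l:ℕ):ℤ) ≡ m * (-((j:ℕ):ℤ) + 1) [ZMOD (N:ℤ)] := by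
      refine Int.ModEq.mul_left m ?_
      calc ((l:ℕ):ℤ) = (((-j + 1 : Fin N):ℕ):ℤ) := by rw [← h]
        _ ≡ (((-j : Fin N):ℕ):ℤ) + 1 [ZMOD (N:ℤ)] := fin_add_one_val_modeq (-j)
        _ ≡ -((j:ℕ):ℤ) + 1 [ZMOD (N:ℤ)] := (fin_neg_val_modeq j).add_right 1
    rw [omega_zpow_congr hN0 hl,
      show m * (-((j:ℕ):ℤ) + 1) = m + m * (-((j:ℕ):ℤ)) by ring,
      zpow_add₀ (omega_ne N), ← mul_assoc, ← zpow_add₀ (omega_ne N),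
      show -m + m = 0 by ring, zpow_zero, one_mul]
  · have h2 : j ≠ (-l : Fin N) + 1 := by
      intro hc
      apply h
      rw [hc]; abel
    rw [if_neg h, if_neg h2]
    simp

/-- The matrix `P·Z^(−2k)` commutes with the Harper matrix at `b = 2πk/N`. -/
theorem parity_clock_even_commutes_harper (N : ℕ) (hN : 2 ≤ N) (k : ℤ) (a ε : ℝ) :
    (parityP N * (clockZ N) ^ (-(2 * k))) * harper N a (2 * Real.pi * (k : ℝ) / N) ε
      = harper N a (2 * Real.pi * (k : ℝ) / N) ε * (parityP N * (clockZ N) ^ (-(2 * k))) := by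
  have hN0 : N ≠ 0 := by omega
  have hNC : (N : ℂ) ≠ 0 := Nat.cast_ne_zero.mpr hN0
  have hexp1 : Complex.exp (((2 * Real.pi * (k:ℝ) / N : ℝ) : ℂ) * Complex.I)
      = omegaN N ^ k := by
    rw [omegaN, ← Complex.exp_int_mul]
    congr 1
    push_cast
    field_simp
  have hexp2 : Complex.exp (-((2 * Real.pi * (k:ℝ) / N : ℝ) : ℂ) * Complex.I)
      = omegaN N ^ (-k) := by
    rw [show -(((2 * Real.pi * (k:ℝ) / N : ℝ)) : ℂ) * Complex.I
        = -((((2 * Real.pi * (k:ℝ) / N : ℝ)) : ℂ) * Complex.I) by ring,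
      Complex.exp_neg, hexp1, ← _root_.zpow_neg]
  rw [harper, hexp1, hexp2]
  rw [Matrix.mul_add, Matrix.mul_add, Matrix.add_mul, Matrix.add_mul,
    Matrix.mul_smul, Matrix.mul_smul, Matrix.mul_smul,
    Matrix.smul_mul, Matrix.smul_mul, Matrix.smul_mul,
    Matrix.mul_add, Matrix.add_mul,
    MX hN (-(2*k)), MXH hN (-(2*k)), MZ hN (-(2*k)), MZH hN (-(2*k)),
    smul_smul, smul_smul]
  have hc1 : (a:ℂ)/2 * omegaN N ^ k * omegaN N ^ (-(2*k)) = (a:ℂ)/2 * omegaN N ^ (-k) := by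
    rw [mul_assoc, ← zpow_add₀ (omega_ne N)]
    congr 2
    ring
  have hc2 : (a:ℂ)/2 * omegaN N ^ (-k) * omegaN N ^ (-(-(2*k))) = (a:ℂ)/2 * omegaN N ^ k := by
    rw [mul_assoc, ← zpow_add₀ (omega_ne N)]
    congr 2
    ring
  rw [hc1, hc2]
  abel_nf
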